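/- For every positive integer n and any three pairwise distinct points z₁, z₂, z₃ in the plane, p_n(z₁,z₂,z₃) = 0 if and only if z₁, z₂, z₃ are collinear, where p_n is the permuted sum of products of the kernel K_n(z) = x^{2n−1}/|z|^{2n}. -/

import Mathlib

set_option linter.unreachableTactic false
set_option linter.unusedTactic false

open Real

/-- The kernel `K_n(x,y) = x^(2n-1) / (x² + y²)^n`. -/
noncomputable def Kker (n : ℕ) (p : ℝ × ℝ) : ℝ :=
  p.1 ^ (2 * n - 1) / (p.1 ^ 2 + p.2 ^ 2) ^ n

/-- The permuted sum `p_n(z₁,z₂,z₃)`. -/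
noncomputable def pperm (n : ℕ) (z₁ z₂ z₃ : ℝ × ℝ) : ℝ :=
  Kker n (z₁ - z₂) * Kker n (z₁ - z₃) + Kker n (z₂ - z₁) * Kker n (z₂ - z₃)
    + Kker n (z₃ - z₁) * Kker n (z₃ - z₂)

/-- reverse Young: `l*a - u*b ≤ a^l * b^(-u)` when `l = u+1`. -/
lemma revYoung {l u a b : ℝ} (hu : 0 < u) (hl : l = u + 1) (ha : 0 < a) (hb : 0 < b) :
    l * a - u * b ≤ a ^ l * b ^ (-u) := by
  have hl0 : 0 < l := by linarith
  have hp1 : (0:ℝ) < a ^ l * b ^ (-u) := by positivity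
  have hal : (0:ℝ) < a ^ l := by positivity
  have hbu : (0:ℝ) < b ^ (-u) := by positivity
  have hp1l : (0:ℝ) < (a ^ l * b ^ (-u)) ^ (1/l) := by positivity
  have hbul : (0:ℝ) < b ^ (u/l) := by positivity
  have hw : 1/l + u/l = 1 := by field_simp; linarith
  have hgm := Real.geom_mean_le_arith_mean2_weighted
    (by positivity : (0:ℝ) ≤ 1/l) (by positivity : (0:ℝ) ≤ u/l)
    (le_of_lt hp1) hb.le hw
  have hkey : (a ^ l * b ^ (-u)) ^ (1/l) * b ^ (u/l) = a := by
    have hlog : Real.log ((a ^ l * b ^ (-u)) ^ (1/l) * b ^ (u/l)) = Real.log a := by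
      rw [Real.log_mul hp1l.ne' hbul.ne', Real.log_rpow hp1,
          Real.log_mul hal.ne' hbu.ne', Real.log_rpow ha, Real.log_rpow hb,
          Real.log_rpow hb]
      field_simp
      ring
    exact Real.log_injOn_pos (Set.mem_Ioi.mpr (by positivity))
      (Set.mem_Ioi.mpr ha) hlog
  rw [hkey] at hgm
  have h2 := mul_le_mul_of_nonneg_left hgm hl0.le
  have h3 : l * (1/l * (a ^ l * b ^ (-u)) + u/l * b) = a ^ l * b ^ (-u) + u * b := by
    field_simp
  nlinarith [h2, h3]

/-- normalized Lemma 1: `(x*y)^m ≤ (x+y)^m * (u^(m+1)*x^m + l^(m+1)*y^m)` for `l+u=1`. -/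
lemma lem1 (m : ℕ) {x y l u : ℝ} (hx : 0 < x) (hy : 0 < y) (hl : 0 < l) (hu : 0 < u)
    (hlu : l + u = 1) :
    (x*y)^m ≤ (x+y)^m * (u^(m+1)*x^m + l^(m+1)*y^m) := by
  have hxl : (0:ℝ) < x/l := by positivity
  have hyu : (0:ℝ) < y/u := by positivity
  have hA : (0:ℝ) < (x/l) ^ (l:ℝ) := by positivity
  have hB : (0:ℝ) < (y/u) ^ (u:ℝ) := by positivity
  have hC : (0:ℝ) < (u^m*x^m) := by positivity
  have hD : (0:ℝ) < (l^m*y^m) := by positivity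
  have hCu : (0:ℝ) < (u^m*x^m) ^ (u:ℝ) := by positivity
  have hDl : (0:ℝ) < (l^m*y^m) ^ (l:ℝ) := by positivity
  have h1 : (x/l) ^ (l:ℝ) * (y/u) ^ (u:ℝ) ≤ x + y := by
    have := Real.geom_mean_le_arith_mean2_weighted hl.le hu.le hxl.le hyu.le hlu
    calc (x/l) ^ (l:ℝ) * (y/u) ^ (u:ℝ) ≤ l * (x/l) + u * (y/u) := this
      _ = x + y := by field_simp
  have h2 : (u^m*x^m) ^ (u:ℝ) * (l^m*y^m) ^ (l:ℝ) ≤ u^(m+1)*x^m + l^(m+1)*y^m := by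
    have hw : u + l = 1 := by linarith
    have := Real.geom_mean_le_arith_mean2_weighted hu.le hl.le hC.le hD.le hw
    calc (u^m*x^m) ^ (u:ℝ) * (l^m*y^m) ^ (l:ℝ) ≤ u * (u^m*x^m) + l * (l^m*y^m) := this
      _ = u^(m+1)*x^m + l^(m+1)*y^m := by ring
  have hkey : ((x/l) ^ (l:ℝ) * (y/u) ^ (u:ℝ))^m * ((u^m*x^m) ^ (u:ℝ) * (l^m*y^m) ^ (l:ℝ))
      = (x*y)^m := by
    have hlog : Real.log (((x/l) ^ (l:ℝ) * (y/u) ^ (u:ℝ))^m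
        * ((u^m*x^m) ^ (u:ℝ) * (l^m*y^m) ^ (l:ℝ))) = Real.log ((x*y)^m) := by
      rw [Real.log_mul (pow_pos (mul_pos hA hB) m).ne' (mul_pos hCu hDl).ne', Real.log_pow,
          Real.log_mul hA.ne' hB.ne', Real.log_rpow hxl, Real.log_rpow hyu,
          Real.log_mul hCu.ne' hDl.ne', Real.log_rpow hC, Real.log_rpow hD,
          Real.log_pow, Real.log_mul hx.ne' hy.ne',
          Real.log_div hx.ne' hl.ne', Real.log_div hy.ne' hu.ne',
          Real.log_mul (by positivity : (u:ℝ)^m ≠ 0) (by positivity : (x:ℝ)^m ≠ 0),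
          Real.log_mul (by positivity : (l:ℝ)^m ≠ 0) (by positivity : (y:ℝ)^m ≠ 0),
          Real.log_pow, Real.log_pow, Real.log_pow, Real.log_pow]
      linear_combination ((m:ℝ) * (Real.log x + Real.log y)) * hlu
    exact Real.log_injOn_pos (Set.mem_Ioi.mpr (by positivity))
      (Set.mem_Ioi.mpr (by positivity)) hlog
  calc (x*y)^m = ((x/l) ^ (l:ℝ) * (y/u) ^ (u:ℝ))^m
        * ((u^m*x^m) ^ (u:ℝ) * (l^m*y^m) ^ (l:ℝ)) := hkey.symm
    _ ≤ (x+y)^m * (u^(m+1)*x^m + l^(m+1)*y^m) := by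
        apply mul_le_mul (pow_le_pow_left₀ (by positivity) h1 m) h2 (by positivity)
          (by positivity)

/-- normalized Lemma 2: for `l = u+1`, `0 < y < x`:
`(x-y)^m * (l^(m+1)*y^m - u^(m+1)*x^m) ≤ (x*y)^m`. -/
lemma lem2' (m : ℕ) {x y u l : ℝ} (hy : 0 < y) (hxy : y < x) (hu : 0 < u)
    (hl : l = u + 1) :
    (x-y)^m * (l^(m+1)*y^m - u^(m+1)*x^m) ≤ (x*y)^m := by
  have hx : 0 < x := lt_trans hy hxy
  have hl0 : 0 < l := by linarith
  have hxl : (0:ℝ) < x/l := by positivity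
  have hyu : (0:ℝ) < y/u := by positivity
  have hA : (0:ℝ) < (x/l) ^ (l:ℝ) := by positivity
  have hB : (0:ℝ) < (y/u) ^ (-u:ℝ) := by positivity
  have hC : (0:ℝ) < (l^m*y^m) := by positivity
  have hD : (0:ℝ) < (u^m*x^m) := by positivity
  have hCl : (0:ℝ) < (l^m*y^m) ^ (l:ℝ) := by positivity
  have hDu : (0:ℝ) < (u^m*x^m) ^ (-u:ℝ) := by positivity
  -- W1
  have h1 : x - y ≤ (x/l) ^ (l:ℝ) * (y/u) ^ (-u:ℝ) := by
    have := revYoung hu hl hxl hyu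
    calc x - y = l * (x/l) - u * (y/u) := by field_simp
      _ ≤ (x/l) ^ (l:ℝ) * (y/u) ^ (-u:ℝ) := this
  -- W2
  have h2 : l^(m+1)*y^m - u^(m+1)*x^m ≤ (l^m*y^m) ^ (l:ℝ) * (u^m*x^m) ^ (-u:ℝ) := by
    have := revYoung hu hl hC hD
    calc l^(m+1)*y^m - u^(m+1)*x^m = l * (l^m*y^m) - u * (u^m*x^m) := by ring
      _ ≤ (l^m*y^m) ^ (l:ℝ) * (u^m*x^m) ^ (-u:ℝ) := this
  have hkey : ((x/l) ^ (l:ℝ) * (y/u) ^ (-u:ℝ))^m * ((l^m*y^m) ^ (l:ℝ) * (u^m*x^m) ^ (-u:ℝ))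
      = (x*y)^m := by
    have hlog : Real.log (((x/l) ^ (l:ℝ) * (y/u) ^ (-u:ℝ))^m
        * ((l^m*y^m) ^ (l:ℝ) * (u^m*x^m) ^ (-u:ℝ))) = Real.log ((x*y)^m) := by
      rw [Real.log_mul (pow_pos (mul_pos hA hB) m).ne' (mul_pos hCl hDu).ne', Real.log_pow,
          Real.log_mul hA.ne' hB.ne', Real.log_rpow hxl, Real.log_rpow hyu,
          Real.log_mul hCl.ne' hDu.ne', Real.log_rpow hC, Real.log_rpow hD,
          Real.log_pow, Real.log_mul hx.ne' hy.ne',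
          Real.log_div hx.ne' hl0.ne', Real.log_div hy.ne' hu.ne',
          Real.log_mul (by positivity : (l:ℝ)^m ≠ 0) (by positivity : (y:ℝ)^m ≠ 0),
          Real.log_mul (by positivity : (u:ℝ)^m ≠ 0) (by positivity : (x:ℝ)^m ≠ 0),
          Real.log_pow, Real.log_pow, Real.log_pow, Real.log_pow]
      linear_combination ((m:ℝ) * (Real.log x + Real.log y)) * hl
    exact Real.log_injOn_pos (Set.mem_Ioi.mpr (by positivity))
      (Set.mem_Ioi.mpr (by positivity)) hlog
  have hz : (0:ℝ) ≤ x - y := by linarith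
  calc (x-y)^m * (l^(m+1)*y^m - u^(m+1)*x^m)
      ≤ (x-y)^m * ((l^m*y^m) ^ (l:ℝ) * (u^m*x^m) ^ (-u:ℝ)) := by
        apply mul_le_mul_of_nonneg_left h2 (by positivity)
    _ ≤ ((x/l) ^ (l:ℝ) * (y/u) ^ (-u:ℝ))^m * ((l^m*y^m) ^ (l:ℝ) * (u^m*x^m) ^ (-u:ℝ)) := by
        apply mul_le_mul_of_nonneg_right (pow_le_pow_left₀ hz h1 m) (by positivity)
    _ = (x*y)^m := hkey

/-- general Lemma 2. -/
lemma lem2 (m : ℕ) {x y P Q : ℝ} (hy : 0 < y) (hxy : y < x) (hQ : 0 < Q) (hPQ : Q < P) :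
    (x-y)^m * (P^(m+1)*y^m - Q^(m+1)*x^m) ≤ (P-Q)^(m+1) * (x*y)^m := by
  set s := P - Q with hs
  have hs0 : 0 < s := by simp [hs]; linarith
  have h := lem2' m hy hxy (u := Q/s) (l := P/s) (by positivity) (by field_simp; linarith)
  have hP : (P/s)^(m+1) = P^(m+1)/s^(m+1) := div_pow P s (m+1)
  have hQ' : (Q/s)^(m+1) = Q^(m+1)/s^(m+1) := div_pow Q s (m+1)
  rw [hP, hQ'] at h
  have hsp : (0:ℝ) < s^(m+1) := by positivity
  calc (x-y)^m * (P^(m+1)*y^m - Q^(m+1)*x^m)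
      = s^(m+1) * ((x-y)^m * (P^(m+1)/s^(m+1)*y^m - Q^(m+1)/s^(m+1)*x^m)) := by
        field_simp
    _ ≤ s^(m+1) * (x*y)^m := by
        apply mul_le_mul_of_nonneg_left h hsp.le
    _ = (P-Q)^(m+1) * (x*y)^m := by rw [hs]

/-- hard mixed-sign case. -/
lemma caseB {m : ℕ} (hm : Odd m) {x y P Q R : ℝ}
    (hP : 0 < P) (hQ : 0 < Q) (hR : 0 < R) (t2 : P < Q + R)
    (hy : y < 0) (hxy : 0 < x + y) :
    x^m*y^m*R^(m+1) < (x+y)^m*(Q^(m+1)*x^m + P^(m+1)*y^m) := by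
  have hm0 : m ≠ 0 := by rcases hm with ⟨k, hk⟩; omega
  set Y := -y with hY
  have hY0 : 0 < Y := by simp [hY]; linarith
  have hx : Y < x := by simp [hY] at *; linarith
  have hx0 : 0 < x := lt_trans hY0 hx
  have hym : y^m = -(Y^m) := by
    rw [show y = -Y by simp [hY], hm.neg_pow]
  rcases le_or_gt (P^(m+1)*Y^m) (Q^(m+1)*x^m) with hS | hS
  · -- RHS ≥ 0 > LHS
    have hRHS : 0 ≤ (x+y)^m*(Q^(m+1)*x^m + P^(m+1)*y^m) := by
      apply mul_nonneg (pow_nonneg hxy.le m)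
      rw [hym]; linarith
    have hLHS : x^m*y^m*R^(m+1) < 0 := by
      rw [hym]
      have : 0 < x^m*Y^m*R^(m+1) := by positivity
      nlinarith
    linarith
  · -- lem2 route
    have hQP : Q < P := by
      have h1 : Y^m < x^m := pow_lt_pow_left₀ hx hY0.le hm0
      have h2 : Q^(m+1)*Y^m < Q^(m+1)*x^m := by
        apply mul_lt_mul_of_pos_left h1 (by positivity)
      have h3 : Q^(m+1)*Y^m < P^(m+1)*Y^m := by linarith
      have h4 : Q^(m+1) < P^(m+1) := by
        have := (mul_lt_mul_iff_of_pos_right (by positivity : (0:ℝ) < Y^m)).mp h3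
        exact this
      exact lt_of_pow_lt_pow_left₀ (m+1) hP.le h4
    have hPQR : P - Q < R := by linarith
    have hPQ0 : 0 < P - Q := by linarith
    have hchain := lem2 m hY0 hx hQ hQP
    have hlt : (P-Q)^(m+1) * (x*Y)^m < R^(m+1) * (x*Y)^m := by
      apply mul_lt_mul_of_pos_right
        (pow_lt_pow_left₀ hPQR hPQ0.le (by omega)) (by positivity)
    have hxy' : x + y = x - Y := by simp [hY]
    rw [hxy', hym]
    have hgoal : (x-Y)^m * (P^(m+1)*Y^m - Q^(m+1)*x^m) < R^(m+1)*(x*Y)^m := by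
      calc (x-Y)^m * (P^(m+1)*Y^m - Q^(m+1)*x^m) ≤ (P-Q)^(m+1) * (x*Y)^m := hchain
        _ < R^(m+1)*(x*Y)^m := hlt
    have eq1 : x^m*(-(Y^m))*R^(m+1) = -(R^(m+1)*(x*Y)^m) := by rw [mul_pow]; ring
    have eq2 : (x-Y)^m*(Q^(m+1)*x^m + P^(m+1)*(-(Y^m)))
        = -((x-Y)^m*(P^(m+1)*Y^m - Q^(m+1)*x^m)) := by ring
    linarith [hgoal, eq1.le, eq2.le]

lemma scalar_main {m : ℕ} (hm : Odd m) {x y P Q R : ℝ}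
    (hP : 0 < P) (hQ : 0 < Q) (hR : 0 < R)
    (t1 : R < P + Q) (t2 : P < Q + R) (t3 : Q < P + R)
    (h0 : 0 ≤ x + y) (hx0 : x + y = 0 → x ≠ 0) :
    x^m*y^m*R^(m+1) < (x+y)^m*(Q^(m+1)*x^m + P^(m+1)*y^m) := by
  have hm0 : m ≠ 0 := by rcases hm with ⟨k, hk⟩; omega
  rcases h0.eq_or_lt with hz | hpos
  · -- x + y = 0
    have hx : x ≠ 0 := hx0 hz.symm
    have hy : y = -x := by linarith
    have hxm : x^m ≠ 0 := pow_ne_zero m hx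
    have h1 : x^m*y^m*R^(m+1) = -((x^m)^2*R^(m+1)) := by
      rw [hy, hm.neg_pow]; ring
    have h2 : (x+y)^m = 0 := by
      rw [← hz]; exact zero_pow hm0
    rw [h1, h2]
    have : 0 < (x^m)^2*R^(m+1) := by positivity
    nlinarith
  · rcases lt_trichotomy y 0 with hy | hy | hy
    · exact caseB hm hP hQ hR t2 hy hpos
    · -- y = 0
      subst hy
      have hx : 0 < x := by linarith
      have h2 : (0:ℝ)^m = 0 := zero_pow hm0
      rw [h2]
      have : 0 < (x+0)^m*(Q^(m+1)*x^m + P^(m+1)*0) := by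
        rw [add_zero, mul_zero, add_zero]; positivity
      nlinarith [this]
    · rcases lt_trichotomy x 0 with hx | hx | hx
      · -- x < 0 : symmetric caseB
        have h := caseB hm (x := y) (y := x) (P := Q) (Q := P) (R := R)
          hQ hP hR t3 hx (by linarith)
        have e1 : y^m*x^m*R^(m+1) = x^m*y^m*R^(m+1) := by ring
        have e2 : (y+x)^m*(P^(m+1)*y^m + Q^(m+1)*x^m)
            = (x+y)^m*(Q^(m+1)*x^m + P^(m+1)*y^m) := by rw [add_comm y x]; ring
        linarith [h, e1.le, e2.le]
      · -- x = 0
        subst hx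
        have hy' : 0 < y := hy
        have h2 : (0:ℝ)^m = 0 := zero_pow hm0
        rw [h2]
        have : 0 < (0+y)^m*(Q^(m+1)*0 + P^(m+1)*y^m) := by
          rw [zero_add, mul_zero, zero_add]; positivity
        nlinarith [this]
      · -- both positive : lem1
        set s := P + Q with hs
        have hs0 : 0 < s := by positivity
        have h := lem1 m hx hy (l := P/s) (u := Q/s) (by positivity) (by positivity)
          (by field_simp; exact hs.symm)
        have hQs : (Q/s)^(m+1) = Q^(m+1)/s^(m+1) := div_pow Q s (m+1)
        have hPs : (P/s)^(m+1) = P^(m+1)/s^(m+1) := div_pow P s (m+1)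
        rw [hQs, hPs] at h
        have hsp : (0:ℝ) < s^(m+1) := by positivity
        have h' : s^(m+1) * (x*y)^m ≤ (x+y)^m*(Q^(m+1)*x^m + P^(m+1)*y^m) := by
          have := mul_le_mul_of_nonneg_left h hsp.le
          calc s^(m+1) * (x*y)^m ≤ s^(m+1) * ((x+y)^m * (Q^(m+1)/s^(m+1)*x^m + P^(m+1)/s^(m+1)*y^m)) := this
            _ = (x+y)^m*(Q^(m+1)*x^m + P^(m+1)*y^m) := by field_simp
        have hRs : R^(m+1) < s^(m+1) := pow_lt_pow_left₀ t1 hR.le (by omega)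
        have hxym : 0 < (x*y)^m := by positivity
        have h'' : (x*y)^m * R^(m+1) < (x*y)^m * s^(m+1) := by
          exact mul_lt_mul_of_pos_left hRs hxym
        have e : x^m*y^m*R^(m+1) = (x*y)^m * R^(m+1) := by rw [mul_pow]
        linarith [h, h', h'', e.le]

lemma tri {a1 a2 b1 b2 P Q R : ℝ} (hP2 : P^2 = a1^2+a2^2) (hQ2 : Q^2 = b1^2+b2^2)
    (hR2 : R^2 = (a1+b1)^2+(a2+b2)^2) (hP0 : 0 < P) (hQ0 : 0 < Q) (hR0 : 0 < R)
    (hD : a1*b2 - a2*b1 ≠ 0) : R < P + Q ∧ P < Q + R ∧ Q < P + R := by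
  have hD2 : 0 < (a1*b2-a2*b1)^2 :=
    lt_of_le_of_ne (sq_nonneg _) (Ne.symm (pow_ne_zero 2 hD))
  set dot := a1*b1+a2*b2 with hdot
  have lag : dot^2 = P^2*Q^2 - (a1*b2-a2*b1)^2 := by rw [hP2, hQ2, hdot]; ring
  have hPQ : 0 < P*Q := mul_pos hP0 hQ0
  have dotlt : dot < P*Q := by
    have hsq : dot^2 < (P*Q)^2 := by nlinarith [lag, hD2]
    exact (abs_lt_of_sq_lt_sq hsq (by positivity)).trans_le' (le_abs_self dot) |>.trans_le (le_refl _)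
  refine ⟨?_, ?_, ?_⟩
  · apply lt_of_pow_lt_pow_left₀ 2 (by positivity)
    rw [hR2]
    nlinarith [dotlt, hP2, hQ2]
  · have hQR2 : (Q*R)^2 = (b1^2+b2^2)*((a1+b1)^2+(a2+b2)^2) := by
      rw [mul_pow, hQ2, hR2]
    have key2 : ((b1^2+b2^2)+dot)^2 < (Q*R)^2 := by
      rw [hQR2]; nlinarith [hD2]
    have hQRgt : -(Q*R) < (b1^2+b2^2)+dot := by
      exact (abs_lt_of_sq_lt_sq' key2 (by positivity)).1
    apply lt_of_pow_lt_pow_left₀ 2 (by positivity)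
    rw [hP2]
    nlinarith [hQRgt, hQ2, hR2]
  · have hPR2 : (P*R)^2 = (a1^2+a2^2)*((a1+b1)^2+(a2+b2)^2) := by
      rw [mul_pow, hP2, hR2]
    have key3 : ((a1^2+a2^2)+dot)^2 < (P*R)^2 := by
      rw [hPR2]; nlinarith [hD2]
    have hPRgt : -(P*R) < (a1^2+a2^2)+dot := by
      exact (abs_lt_of_sq_lt_sq' key3 (by positivity)).1
    apply lt_of_pow_lt_pow_left₀ 2 (by positivity)
    rw [hQ2]
    nlinarith [hPRgt, hP2, hR2]

lemma core_aux (n : ℕ) (hn : 1 ≤ n) {a1 a2 b1 b2 : ℝ} (hD : a1*b2 - a2*b1 ≠ 0)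
    (h0 : 0 ≤ a1 + b1) :
    a1^(2*n-1)*b1^(2*n-1)*((a1+b1)^2+(a2+b2)^2)^n
      < (a1+b1)^(2*n-1)*((b1^2+b2^2)^n*a1^(2*n-1) + (a1^2+a2^2)^n*b1^(2*n-1)) := by
  set m := 2*n-1 with hmdef
  have hm1 : m+1 = 2*n := by omega
  have hm : Odd m := ⟨n-1, by omega⟩
  have ha : a1 ≠ 0 ∨ a2 ≠ 0 := by
    by_contra h; push_neg at h; apply hD; rw [h.1, h.2]; ring
  have hb : b1 ≠ 0 ∨ b2 ≠ 0 := by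
    by_contra h; push_neg at h; apply hD; rw [h.1, h.2]; ring
  have hc : (a1+b1) ≠ 0 ∨ (a2+b2) ≠ 0 := by
    by_contra h; push_neg at h; apply hD
    have e1 : b1 = -a1 := by linarith [h.1]
    have e2 : b2 = -a2 := by linarith [h.2]
    rw [e1, e2]; ring
  have hA : 0 < a1^2+a2^2 := by rcases ha with h|h <;> positivity
  have hB : 0 < b1^2+b2^2 := by rcases hb with h|h <;> positivity
  have hC : 0 < (a1+b1)^2+(a2+b2)^2 := by rcases hc with h|h <;> positivity
  set P := Real.sqrt (a1^2+a2^2) with hPdef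
  set Q := Real.sqrt (b1^2+b2^2) with hQdef
  set R := Real.sqrt ((a1+b1)^2+(a2+b2)^2) with hRdef
  have hP0 : 0 < P := Real.sqrt_pos.mpr hA
  have hQ0 : 0 < Q := Real.sqrt_pos.mpr hB
  have hR0 : 0 < R := Real.sqrt_pos.mpr hC
  have hP2 : P^2 = a1^2+a2^2 := Real.sq_sqrt hA.le
  have hQ2 : Q^2 = b1^2+b2^2 := Real.sq_sqrt hB.le
  have hR2 : R^2 = (a1+b1)^2+(a2+b2)^2 := Real.sq_sqrt hC.le
  obtain ⟨t1, t2, t3⟩ := tri hP2 hQ2 hR2 hP0 hQ0 hR0 hD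
  have hx0 : a1 + b1 = 0 → a1 ≠ 0 := by
    intro hz ha1
    apply hD
    have : b1 = 0 := by linarith
    rw [ha1, this]; ring
  have h := scalar_main hm hP0 hQ0 hR0 t1 t2 t3 h0 hx0
  have eP : P^(m+1) = (a1^2+a2^2)^n := by rw [hm1, pow_mul, hP2]
  have eQ : Q^(m+1) = (b1^2+b2^2)^n := by rw [hm1, pow_mul, hQ2]
  have eR : R^(m+1) = ((a1+b1)^2+(a2+b2)^2)^n := by rw [hm1, pow_mul, hR2]
  rw [eP, eQ, eR] at h
  linarith [h]

lemma core (n : ℕ) (hn : 1 ≤ n) {a1 a2 b1 b2 : ℝ} (hD : a1*b2 - a2*b1 ≠ 0) :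
    a1^(2*n-1)*b1^(2*n-1)*((a1+b1)^2+(a2+b2)^2)^n
      < (a1+b1)^(2*n-1)*((b1^2+b2^2)^n*a1^(2*n-1) + (a1^2+a2^2)^n*b1^(2*n-1)) := by
  have hm : Odd (2*n-1) := ⟨n-1, by omega⟩
  rcases le_or_gt 0 (a1+b1) with h0 | h0
  · exact core_aux n hn hD h0
  · have hD' : (-a1)*(-b2) - (-a2)*(-b1) ≠ 0 := by
      intro h; apply hD; linarith [h]
    have h0' : 0 ≤ (-a1) + (-b1) := by linarith
    have h := core_aux n hn hD' h0'
    have ea : (-a1)^(2*n-1) = -(a1^(2*n-1)) := hm.neg_pow a1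
    have eb : (-b1)^(2*n-1) = -(b1^(2*n-1)) := hm.neg_pow b1
    have ec : ((-a1)+(-b1))^(2*n-1) = -((a1+b1)^(2*n-1)) := by
      rw [show (-a1)+(-b1) = -(a1+b1) by ring, hm.neg_pow]
    have e1 : ((-a1)+(-b1))^2+((-a2)+(-b2))^2 = (a1+b1)^2+(a2+b2)^2 := by ring
    have e2 : (-b1)^2+(-b2)^2 = b1^2+b2^2 := by ring
    have e3 : (-a1)^2+(-a2)^2 = a1^2+a2^2 := by ring
    rw [e1, e2, e3, ea, eb, ec] at h
    nlinarith [h]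

lemma pperm_eq (n : ℕ) (hn : 1 ≤ n) (x1 y1 x2 y2 x3 y3 : ℝ)
    (hA : (x1-x2)^2+(y1-y2)^2 ≠ 0) (hB : (x2-x3)^2+(y2-y3)^2 ≠ 0)
    (hC : (x1-x3)^2+(y1-y3)^2 ≠ 0) :
    pperm n (x1,y1) (x2,y2) (x3,y3) = (((x1-x2)+(x2-x3))^(2*n-1)*(((x2-x3)^2+(y2-y3)^2)^n*(x1-x2)^(2*n-1) + ((x1-x2)^2+(y1-y2)^2)^n*(x2-x3)^(2*n-1)) - (x1-x2)^(2*n-1)*(x2-x3)^(2*n-1)*((((x1-x2)+(x2-x3)))^2+(((y1-y2)+(y2-y3)))^2)^n) / (((x1-x2)^2+(y1-y2)^2)^n*((x2-x3)^2+(y2-y3)^2)^n*((((x1-x2)+(x2-x3)))^2+(((y1-y2)+(y2-y3)))^2)^n) := by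
  have hm : Odd (2*n-1) := ⟨n-1, by omega⟩
  have hC' : ((x1-x2)+(x2-x3))^2+((y1-y2)+(y2-y3))^2 ≠ 0 := by
    intro h; apply hC; rw [← h]; ring
  unfold pperm Kker
  simp only [Prod.mk_sub_mk]
  rw [show x2 - x1 = -(x1-x2) by ring, show x3 - x1 = -((x1-x2)+(x2-x3)) by ring,
      show x3 - x2 = -(x2-x3) by ring, hm.neg_pow, hm.neg_pow, hm.neg_pow,
      show x1 - x3 = (x1-x2)+(x2-x3) by ring,
      show (-(x1 - x2)) ^ 2 + (y2 - y1) ^ 2 = (x1-x2)^2+(y1-y2)^2 by ring,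
      show (-(x2 - x3)) ^ 2 + (y3 - y2) ^ 2 = (x2-x3)^2+(y2-y3)^2 by ring,
      show (-((x1 - x2) + (x2 - x3))) ^ 2 + (y3 - y1) ^ 2
        = ((x1-x2)+(x2-x3))^2+((y1-y2)+(y2-y3))^2 by ring,
      show ((x1-x2)+(x2-x3)) ^ 2 + (y1 - y3) ^ 2
        = ((x1-x2)+(x2-x3))^2+((y1-y2)+(y2-y3))^2 by ring]
  have hAn : ((x1-x2)^2+(y1-y2)^2)^n ≠ 0 := pow_ne_zero n hA
  have hBn : ((x2-x3)^2+(y2-y3)^2)^n ≠ 0 := pow_ne_zero n hB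
  have hCn : ((((x1-x2)+(x2-x3)))^2+(((y1-y2)+(y2-y3)))^2)^n ≠ 0 := pow_ne_zero n hC'
  field_simp
  ring

lemma collinear_iff_cross (z₁ z₂ z₃ : ℝ × ℝ) (h12 : z₁ ≠ z₂) :
    Collinear ℝ ({z₁, z₂, z₃} : Set (ℝ × ℝ))
      ↔ (z₁.1-z₂.1)*(z₂.2-z₃.2) - (z₁.2-z₂.2)*(z₂.1-z₃.1) = 0 := by
  constructor
  · intro h
    obtain ⟨p₀, v, hv⟩ := (collinear_iff_exists_forall_eq_smul_vadd _).mp h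
    obtain ⟨r₁, h1⟩ := hv z₁ (by simp)
    obtain ⟨r₂, h2⟩ := hv z₂ (by simp)
    obtain ⟨r₃, h3⟩ := hv z₃ (by simp)
    have e11 : z₁.1 = r₁ * v.1 + p₀.1 := by rw [h1]; simp [Prod.smul_fst]
    have e12 : z₁.2 = r₁ * v.2 + p₀.2 := by rw [h1]; simp [Prod.smul_snd]
    have e21 : z₂.1 = r₂ * v.1 + p₀.1 := by rw [h2]; simp [Prod.smul_fst]
    have e22 : z₂.2 = r₂ * v.2 + p₀.2 := by rw [h2]; simp [Prod.smul_snd]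
    have e31 : z₃.1 = r₃ * v.1 + p₀.1 := by rw [h3]; simp [Prod.smul_fst]
    have e32 : z₃.2 = r₃ * v.2 + p₀.2 := by rw [h3]; simp [Prod.smul_snd]
    rw [e11, e12, e21, e22, e31, e32]; ring
  · intro hD
    have ha : (z₁.1 - z₂.1, z₁.2 - z₂.2) ≠ (0 : ℝ × ℝ) := by
      intro h
      apply h12
      have h1 := congrArg Prod.fst h
      have h2 := congrArg Prod.snd h
      simp at h1 h2
      exact Prod.ext (by linarith) (by linarith)
    -- get scaling factor t with z₂ - z₃ = t • (z₁ - z₂) componentwise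
    obtain ⟨t, ht1, ht2⟩ : ∃ t : ℝ, z₂.1 - z₃.1 = t * (z₁.1 - z₂.1)
        ∧ z₂.2 - z₃.2 = t * (z₁.2 - z₂.2) := by
      rcases eq_or_ne (z₁.1 - z₂.1) 0 with h1 | h1
      · have h2 : z₁.2 - z₂.2 ≠ 0 := by
          intro h2; apply ha; rw [h1, h2]; rfl
        refine ⟨(z₂.2 - z₃.2)/(z₁.2 - z₂.2), ?_, (div_mul_cancel₀ _ h2).symm⟩
        rw [h1, mul_zero]
        have : (z₁.2-z₂.2)*(z₂.1-z₃.1) = 0 := by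
          linear_combination -hD + (z₂.2 - z₃.2) * h1
        rcases mul_eq_zero.mp this with h | h
        · exact absurd h h2
        · linarith
      · refine ⟨(z₂.1 - z₃.1)/(z₁.1 - z₂.1), (div_mul_cancel₀ _ h1).symm, ?_⟩
        rw [div_mul_eq_mul_div, eq_div_iff h1]
        nlinarith [hD]
    rw [collinear_iff_of_mem (Set.mem_insert z₁ _)]
    refine ⟨(z₁.1 - z₂.1, z₁.2 - z₂.2), ?_⟩
    intro p hp
    rcases hp with h | h | h
    · exact ⟨0, by rw [h]; simp⟩
    · refine ⟨-1, ?_⟩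
      rw [h]
      apply Prod.ext <;> · simp [Prod.smul_fst, Prod.smul_snd]; try ring
    · simp at h
      refine ⟨-1-t, ?_⟩
      rw [h]
      apply Prod.ext
      · simp [Prod.smul_fst]
        nlinarith [ht1]
      · simp [Prod.smul_snd]
        nlinarith [ht2]


lemma sumsq_pos {u v : ℝ} (h : ¬(u = 0 ∧ v = 0)) : 0 < u^2 + v^2 := by
  rcases not_and_or.mp h with h|h <;> positivity

lemma num_zero (n : ℕ) (hn : 1 ≤ n) {a1 a2 b1 b2 : ℝ} (hD : a1*b2 - a2*b1 = 0)
    (ha : ¬(a1 = 0 ∧ a2 = 0)) :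
    (a1+b1)^(2*n-1)*((b1^2+b2^2)^n*a1^(2*n-1) + (a1^2+a2^2)^n*b1^(2*n-1))
      - a1^(2*n-1)*b1^(2*n-1)*((a1+b1)^2+(a2+b2)^2)^n = 0 := by
  obtain ⟨t, hb1, hb2⟩ : ∃ t : ℝ, b1 = t * a1 ∧ b2 = t * a2 := by
    rcases eq_or_ne a1 0 with h1 | h1
    · have h2 : a2 ≠ 0 := by
        intro h2; exact ha ⟨h1, h2⟩
      refine ⟨b2/a2, ?_, (div_mul_cancel₀ _ h2).symm⟩
      have hb : a2 * b1 = 0 := by linear_combination -hD + b2 * h1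
      rcases mul_eq_zero.mp hb with h | h
      · exact absurd h h2
      · rw [h, h1, mul_zero]
    · refine ⟨b1/a1, (div_mul_cancel₀ _ h1).symm, ?_⟩
      rw [div_mul_eq_mul_div, eq_div_iff h1]
      linear_combination hD
  rw [hb1, hb2]
  set m := 2*n-1 with hmdef
  have h2n : 2*n = m+1 := by omega
  rw [show a1 + t*a1 = (1+t)*a1 by ring,
      show (t*a1)^2+(t*a2)^2 = t^2*(a1^2+a2^2) by ring,
      show ((1+t)*a1)^2 + (a2+t*a2)^2 = (1+t)^2*(a1^2+a2^2) by ring,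
      mul_pow (1+t) a1 m, mul_pow t a1 m, mul_pow (t^2) (a1^2+a2^2) n,
      mul_pow ((1+t)^2) (a1^2+a2^2) n, ← pow_mul t 2 n, ← pow_mul (1+t) 2 n,
      h2n, pow_succ t m, pow_succ (1+t) m]
  ring


/-- for `n ≥ 1` and pairwise distinct points, `p_n(z₁,z₂,z₃) = 0`
iff the three points are collinear. -/
theorem stmt_4 (n : ℕ) (hn : 1 ≤ n) (z₁ z₂ z₃ : ℝ × ℝ)
    (h12 : z₁ ≠ z₂) (h13 : z₁ ≠ z₃) (h23 : z₂ ≠ z₃) :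
    pperm n z₁ z₂ z₃ = 0 ↔ Collinear ℝ ({z₁, z₂, z₃} : Set (ℝ × ℝ)) := by
  obtain ⟨x1, y1⟩ := z₁
  obtain ⟨x2, y2⟩ := z₂
  obtain ⟨x3, y3⟩ := z₃
  rw [collinear_iff_cross (x1,y1) (x2,y2) (x3,y3) h12]
  dsimp only
  have hane : ¬(x1 - x2 = 0 ∧ y1 - y2 = 0) := by
    rintro ⟨h1, h2⟩
    exact h12 (Prod.ext (by show x1 = x2; linarith) (by show y1 = y2; linarith))
  have hbne : ¬(x2 - x3 = 0 ∧ y2 - y3 = 0) := by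
    rintro ⟨h1, h2⟩
    exact h23 (Prod.ext (by show x2 = x3; linarith) (by show y2 = y3; linarith))
  have hcne : ¬(x1 - x3 = 0 ∧ y1 - y3 = 0) := by
    rintro ⟨h1, h2⟩
    exact h13 (Prod.ext (by show x1 = x3; linarith) (by show y1 = y3; linarith))
  have hA : 0 < (x1-x2)^2+(y1-y2)^2 := sumsq_pos hane
  have hB : 0 < (x2-x3)^2+(y2-y3)^2 := sumsq_pos hbne
  have hC : 0 < (x1-x3)^2+(y1-y3)^2 := sumsq_pos hcne
  have hC' : 0 < ((x1-x2)+(x2-x3))^2+((y1-y2)+(y2-y3))^2 := by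
    have e : ((x1-x2)+(x2-x3))^2+((y1-y2)+(y2-y3))^2 = (x1-x3)^2+(y1-y3)^2 := by ring
    rw [e]; exact hC
  have hDen : 0 < ((x1-x2)^2+(y1-y2)^2)^n * ((x2-x3)^2+(y2-y3)^2)^n
      * ((((x1-x2)+(x2-x3)))^2+(((y1-y2)+(y2-y3)))^2)^n := by positivity
  rw [pperm_eq n hn x1 y1 x2 y2 x3 y3 hA.ne' hB.ne' hC.ne']
  rw [div_eq_zero_iff]
  constructor
  · rintro (h | h)
    · by_contra hD
      have hcore := core n hn (a1 := x1-x2) (a2 := y1-y2) (b1 := x2-x3) (b2 := y2-y3)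
        (fun hc => hD (by linarith))
      linarith
    · exact absurd h hDen.ne'
  · intro hD
    left
    have hz := num_zero n hn (a1 := x1-x2) (a2 := y1-y2) (b1 := x2-x3) (b2 := y2-y3)
      (by linarith) hane
    linarith
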